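/- For a finite nonempty set A in a commutative semigroup and integers 1 ≤ i < k, |kA|^{1/k} ≤ |iA|^{1/i}; equivalently |kA|^i ≤ |iA|^k, where kA denotes the k-fold sumset. -/

import Mathlib

open Pointwise

/-- `kfold A n` is the `(n+1)`-fold sumset `A + A + ⋯ + A` (with `n+1` summands). -/
def kfold {α : Type*} [AddCommSemigroup α] [DecidableEq α] (A : Finset α) : ℕ → Finset α
  | 0 => A
  | n + 1 => kfold A n + A

open Finset
lemma rpow_inv_nat_pow {x : ℝ} (hx : 0 ≤ x) {k : ℕ} (hk : 0 < k) :
    (x ^ (1/(k:ℝ))) ^ k = x := by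
  have hk' : (k:ℝ) ≠ 0 := Nat.cast_ne_zero.mpr hk.ne'
  rw [← Real.rpow_natCast (x ^ (1/(k:ℝ))) k, ← Real.rpow_mul hx, one_div,
    inv_mul_cancel₀ hk', Real.rpow_one]



lemma geom_holder {ι : Type*} (s : Finset ι) (m : ℕ) (hm : 0 < m) (g : ℕ → ι → ℝ)
    (hg : ∀ j ∈ Finset.range m, ∀ y ∈ s, 0 ≤ g j y) :
    ∑ y ∈ s, ∏ j ∈ Finset.range m, (g j y) ^ (1/(m:ℝ))
      ≤ ∏ j ∈ Finset.range m, (∑ y ∈ s, g j y) ^ (1/(m:ℝ)) := by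
  have hm' : (m:ℝ) ≠ 0 := Nat.cast_ne_zero.mpr hm.ne'
  by_cases h0 : ∃ j ∈ Finset.range m, ∑ y ∈ s, g j y = 0
  · obtain ⟨j0, hj0, hS⟩ := h0
    have hz : ∀ y ∈ s, g j0 y = 0 :=
      (Finset.sum_eq_zero_iff_of_nonneg (fun y hy => hg j0 hj0 y hy)).mp hS
    have hL : ∑ y ∈ s, ∏ j ∈ Finset.range m, (g j y) ^ (1/(m:ℝ)) = 0 := by
      refine Finset.sum_eq_zero fun y hy => ?_
      refine Finset.prod_eq_zero hj0 ?_
      rw [hz y hy, Real.zero_rpow (by positivity)]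
    rw [hL]
    exact Finset.prod_nonneg fun j hj =>
      Real.rpow_nonneg (Finset.sum_nonneg fun y hy => hg j hj y hy) _
  · push_neg at h0
    have hSpos : ∀ j ∈ Finset.range m, 0 < ∑ y ∈ s, g j y := fun j hj =>
      lt_of_le_of_ne (Finset.sum_nonneg fun y hy => hg j hj y hy) (Ne.symm (h0 j hj))
    have key : ∀ y ∈ s, ∏ j ∈ Finset.range m, (g j y) ^ (1/(m:ℝ))
        ≤ (∏ j ∈ Finset.range m, (∑ y' ∈ s, g j y') ^ (1/(m:ℝ)))
          * (∑ j ∈ Finset.range m, (1/(m:ℝ)) * (g j y / (∑ y' ∈ s, g j y'))) := by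
      intro y hy
      have h1 : ∏ j ∈ Finset.range m, (g j y) ^ (1/(m:ℝ))
          = (∏ j ∈ Finset.range m, (∑ y' ∈ s, g j y') ^ (1/(m:ℝ)))
            * ∏ j ∈ Finset.range m, (g j y / (∑ y' ∈ s, g j y')) ^ (1/(m:ℝ)) := by
        rw [← Finset.prod_mul_distrib]
        refine Finset.prod_congr rfl fun j hj => ?_
        have hgy : (∑ y' ∈ s, g j y') * (g j y / (∑ y' ∈ s, g j y')) = g j y := by
          rw [mul_comm]; exact div_mul_cancel₀ _ (hSpos j hj).ne'
        rw [← Real.mul_rpow (le_of_lt (hSpos j hj))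
          (div_nonneg (hg j hj y hy) (le_of_lt (hSpos j hj))), hgy]
      rw [h1]
      refine mul_le_mul_of_nonneg_left ?_
        (Finset.prod_nonneg fun j hj => Real.rpow_nonneg (le_of_lt (hSpos j hj)) _)
      exact Real.geom_mean_le_arith_mean_weighted (Finset.range m)
        (fun _ => 1/(m:ℝ)) (fun j => g j y / (∑ y' ∈ s, g j y'))
        (fun i _ => by positivity)
        (by simp [Finset.sum_const, Finset.card_range]; field_simp)
        (fun j hj => div_nonneg (hg j hj y hy) (le_of_lt (hSpos j hj)))
    calc ∑ y ∈ s, ∏ j ∈ Finset.range m, (g j y) ^ (1/(m:ℝ))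
        ≤ ∑ y ∈ s, ((∏ j ∈ Finset.range m, (∑ y' ∈ s, g j y') ^ (1/(m:ℝ)))
            * (∑ j ∈ Finset.range m, (1/(m:ℝ)) * (g j y / (∑ y' ∈ s, g j y')))) :=
          Finset.sum_le_sum key
      _ = (∏ j ∈ Finset.range m, (∑ y' ∈ s, g j y') ^ (1/(m:ℝ)))
            * ∑ y ∈ s, ∑ j ∈ Finset.range m, (1/(m:ℝ)) * (g j y / (∑ y' ∈ s, g j y')) := by
          rw [Finset.mul_sum]
      _ ≤ ∏ j ∈ Finset.range m, (∑ y' ∈ s, g j y') ^ (1/(m:ℝ)) := by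
          rw [Finset.sum_comm]
          have heq : ∀ j ∈ Finset.range m,
              ∑ y ∈ s, (1/(m:ℝ)) * (g j y / (∑ y' ∈ s, g j y')) = 1/(m:ℝ) := by
            intro j hj
            rw [← Finset.mul_sum, ← Finset.sum_div, div_self (hSpos j hj).ne', mul_one]
          rw [Finset.sum_congr rfl heq, Finset.sum_const, Finset.card_range]
          have : (m:ℝ) • (1/(m:ℝ)) = 1 := by rw [smul_eq_mul]; field_simp
          rw [nsmul_eq_mul, mul_one_div, div_self hm', mul_one]

lemma LW {γ : Type*} [DecidableEq γ] [Inhabited γ] :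
    ∀ (k : ℕ), 0 < k → ∀ (F : Finset (List γ)), F.Nonempty → (∀ L ∈ F, L.length = k) →
    (F.card : ℝ) ^ (k - 1) ≤ ∏ j ∈ Finset.range k, ((F.image (fun L => L.eraseIdx j)).card : ℝ) := by
  intro k
  induction k with
  | zero => intro h; exact absurd h (lt_irrefl 0)
  | succ k ih =>
    intro _ F hFne hFlen
    rcases Nat.eq_zero_or_pos k with hk0 | hk
    · subst hk0
      have himg : (F.image (fun L => L.eraseIdx 0)).Nonempty := hFne.image _
      have h1 : 1 ≤ (F.image (fun L => L.eraseIdx 0)).card := Finset.card_pos.mpr himg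
      calc (F.card : ℝ) ^ (0 + 1 - 1) = 1 := by norm_num
        _ ≤ _ := by
            rw [show (0:ℕ)+1 = 1 from rfl, Finset.prod_range_one]
            exact_mod_cast h1
    · have hk' : (k:ℝ) ≠ 0 := Nat.cast_ne_zero.mpr hk.ne'
      have hne : ∀ L ∈ F, L ≠ [] := by
        intro L hL h
        have := hFlen L hL
        rw [h] at this
        simp at this
      have hcons : ∀ L ∈ F, L.headI :: L.tail = L := by
        intro L hL
        cases L with
        | nil => exact absurd rfl (hne _ hL)
        | cons a t => simp
      set O := F.image (fun L => L.headI) with hO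
      set fib := fun t => F.filter (fun L => L.headI = t) with hfib
      set G := fun t => (fib t).image List.tail with hG
      have hfibsub : ∀ t, fib t ⊆ F := fun t => Finset.filter_subset _ _
      have hfibne : ∀ t ∈ O, (fib t).Nonempty := by
        intro t ht
        obtain ⟨L, hL, rfl⟩ := Finset.mem_image.mp ht
        exact ⟨L, Finset.mem_filter.mpr ⟨hL, rfl⟩⟩
      have hGcard : ∀ t, (G t).card = (fib t).card := by
        intro t
        refine Finset.card_image_of_injOn ?_
        intro L1 h1 L2 h2 hteq
        have e1 := Finset.mem_filter.mp h1
        have e2 := Finset.mem_filter.mp h2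
        rw [← hcons L1 e1.1, ← hcons L2 e2.1, e1.2, e2.2, hteq]
      have hGlen : ∀ t, ∀ L' ∈ G t, L'.length = k := by
        intro t L' hL'
        obtain ⟨L, hL, rfl⟩ := Finset.mem_image.mp hL'
        have := hFlen L (hfibsub t hL)
        rw [List.length_tail, this]
        omega
      have hGne : ∀ t ∈ O, (G t).Nonempty := fun t ht => (hfibne t ht).image _
      -- fiber sums
      have hsum : F.card = ∑ t ∈ O, (fib t).card := Finset.card_eq_sum_card_image _ _
      -- subset: G t ⊆ F.image (eraseIdx 0)
      have hsub0 : ∀ t, G t ⊆ F.image (fun L => L.eraseIdx 0) := by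
        intro t L' hL'
        obtain ⟨L, hL, rfl⟩ := Finset.mem_image.mp hL'
        exact Finset.mem_image.mpr ⟨L, hfibsub t hL, (List.eraseIdx_zero (l := L)).symm ▸ rfl⟩
      -- projections
      have hproj : ∀ j ∈ Finset.range k,
          ∑ t ∈ O, ((G t).image (fun L' => L'.eraseIdx j)).card
            ≤ (F.image (fun L => L.eraseIdx (j+1))).card := by
        intro j _
        set u := fun t => (((G t).image (fun L' => L'.eraseIdx j)).image (fun L' => t :: L')) with hu
        have hucard : ∀ t, (u t).card = ((G t).image (fun L' => L'.eraseIdx j)).card :=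
          fun t => Finset.card_image_of_injOn (fun a _ b _ h => by injection h)
        have husub : ∀ t ∈ O, u t ⊆ F.image (fun L => L.eraseIdx (j+1)) := by
          intro t _ L'' hL''
          obtain ⟨L', hL', rfl⟩ := Finset.mem_image.mp hL''
          obtain ⟨L0, hL0, rfl⟩ := Finset.mem_image.mp hL'
          obtain ⟨L, hL, rfl⟩ := Finset.mem_image.mp hL0
          have hLF := hfibsub t hL
          have ht : L.headI = t := (Finset.mem_filter.mp hL).2
          have heq : L.eraseIdx (j+1) = t :: (L.tail.eraseIdx j) := by
            conv_lhs => rw [← hcons L hLF]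
            rw [List.eraseIdx_cons_succ, ht]
          exact Finset.mem_image.mpr ⟨L, hLF, heq⟩
        have hdisj : ∀ t1 ∈ O, ∀ t2 ∈ O, t1 ≠ t2 → Disjoint (u t1) (u t2) := by
          intro t1 _ t2 _ hne12
          refine Finset.disjoint_left.mpr ?_
          intro L h1 h2
          obtain ⟨L1, _, rfl⟩ := Finset.mem_image.mp h1
          obtain ⟨L2, _, heq⟩ := Finset.mem_image.mp h2
          injection heq with hh _
          exact hne12 hh.symm
        calc ∑ t ∈ O, ((G t).image (fun L' => L'.eraseIdx j)).card
            = ∑ t ∈ O, (u t).card := by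
              exact (Finset.sum_congr rfl fun t _ => (hucard t).symm)
          _ = (O.biUnion u).card := (Finset.card_biUnion hdisj).symm
          _ ≤ (F.image (fun L => L.eraseIdx (j+1))).card := by
              refine Finset.card_le_card ?_
              intro L hL
              obtain ⟨t, ht, hLt⟩ := Finset.mem_biUnion.mp hL
              exact husub t ht hLt
      -- analytic part
      set P : ℕ → ℝ := fun j => ((F.image (fun L => L.eraseIdx j)).card : ℝ) with hPdef
      set Q : ℕ → γ → ℝ := fun j t => (((G t).image (fun L' => L'.eraseIdx j)).card : ℝ) with hQdef
      have hPnn : ∀ j, 0 ≤ P j := fun j => Nat.cast_nonneg _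
      have hQnn : ∀ j t, 0 ≤ Q j t := fun j t => Nat.cast_nonneg _
      have hc0 : ∀ t ∈ O, ((fib t).card : ℝ) ≤ P 0 := by
        intro t ht
        rw [← hGcard t]
        exact_mod_cast Nat.cast_le.mpr (Finset.card_le_card (hsub0 t))
      have hIH : ∀ t ∈ O, ((fib t).card : ℝ) ^ (k - 1) ≤ ∏ j ∈ Finset.range k, Q j t := by
        intro t ht
        rw [← hGcard t]
        exact ih hk (G t) (hGne t ht) (hGlen t)
      have key : ∀ t ∈ O, ((fib t).card : ℝ)
          ≤ (P 0) ^ (1/(k:ℝ)) * ∏ j ∈ Finset.range k, (Q j t) ^ (1/(k:ℝ)) := by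
        intro t ht
        have hcnn : (0:ℝ) ≤ ((fib t).card : ℝ) := Nat.cast_nonneg _
        have hck : ((fib t).card : ℝ) ^ k ≤ P 0 * ∏ j ∈ Finset.range k, Q j t := by
          calc ((fib t).card : ℝ) ^ k = ((fib t).card : ℝ) * ((fib t).card : ℝ) ^ (k-1) := by
                rw [← pow_succ']
                congr 1
                omega
            _ ≤ P 0 * ∏ j ∈ Finset.range k, Q j t :=
                mul_le_mul (hc0 t ht) (hIH t ht) (pow_nonneg hcnn _) (hPnn 0)
        have h2 : ((fib t).card : ℝ) = (((fib t).card : ℝ) ^ k) ^ (1/(k:ℝ)) := by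
          rw [one_div, Real.pow_rpow_inv_natCast hcnn hk.ne']
        rw [h2]
        calc (((fib t).card : ℝ) ^ k) ^ (1/(k:ℝ))
            ≤ (P 0 * ∏ j ∈ Finset.range k, Q j t) ^ (1/(k:ℝ)) :=
              Real.rpow_le_rpow (pow_nonneg hcnn _) hck (by positivity)
          _ = (P 0) ^ (1/(k:ℝ)) * ∏ j ∈ Finset.range k, (Q j t) ^ (1/(k:ℝ)) := by
              rw [Real.mul_rpow (hPnn 0) (Finset.prod_nonneg fun j _ => hQnn j t),
                Real.finset_prod_rpow _ _ (fun j _ => hQnn j t)]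
      have hchain : (F.card : ℝ) ≤ (P 0) ^ (1/(k:ℝ)) * ∏ j ∈ Finset.range k, (P (j+1)) ^ (1/(k:ℝ)) := by
        calc (F.card : ℝ) = ∑ t ∈ O, ((fib t).card : ℝ) := by exact_mod_cast hsum
          _ ≤ ∑ t ∈ O, ((P 0) ^ (1/(k:ℝ)) * ∏ j ∈ Finset.range k, (Q j t) ^ (1/(k:ℝ))) :=
              Finset.sum_le_sum key
          _ = (P 0) ^ (1/(k:ℝ)) * ∑ t ∈ O, ∏ j ∈ Finset.range k, (Q j t) ^ (1/(k:ℝ)) := by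
              rw [Finset.mul_sum]
          _ ≤ (P 0) ^ (1/(k:ℝ)) * ∏ j ∈ Finset.range k, (∑ t ∈ O, Q j t) ^ (1/(k:ℝ)) := by
              refine mul_le_mul_of_nonneg_left ?_ (Real.rpow_nonneg (hPnn 0) _)
              exact geom_holder O k hk Q (fun j _ t _ => hQnn j t)
          _ ≤ (P 0) ^ (1/(k:ℝ)) * ∏ j ∈ Finset.range k, (P (j+1)) ^ (1/(k:ℝ)) := by
              refine mul_le_mul_of_nonneg_left ?_ (Real.rpow_nonneg (hPnn 0) _)
              refine Finset.prod_le_prod (fun j _ => Real.rpow_nonneg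
                (Finset.sum_nonneg fun t _ => hQnn j t) _) ?_
              intro j hj
              refine Real.rpow_le_rpow (Finset.sum_nonneg fun t _ => hQnn j t) ?_ (by positivity)
              simp only [hQdef, hPdef]
              exact_mod_cast hproj j hj
      have hD : (P 0) ^ (1/(k:ℝ)) * ∏ j ∈ Finset.range k, (P (j+1)) ^ (1/(k:ℝ))
          = (P 0 * ∏ j ∈ Finset.range k, P (j+1)) ^ (1/(k:ℝ)) := by
        rw [Real.mul_rpow (hPnn 0) (Finset.prod_nonneg fun j _ => hPnn _),
          Real.finset_prod_rpow _ _ (fun j _ => hPnn _)]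
      rw [hD] at hchain
      have hfinal : (F.card : ℝ) ^ k ≤ P 0 * ∏ j ∈ Finset.range k, P (j+1) := by
        calc (F.card : ℝ) ^ k ≤ ((P 0 * ∏ j ∈ Finset.range k, P (j+1)) ^ (1/(k:ℝ))) ^ k :=
              pow_le_pow_left₀ (Nat.cast_nonneg _) hchain k
          _ = P 0 * ∏ j ∈ Finset.range k, P (j+1) := by
              refine rpow_inv_nat_pow ?_ hk
              exact mul_nonneg (hPnn 0) (Finset.prod_nonneg fun j _ => hPnn _)
      rw [Nat.add_sub_cancel]
      calc (F.card : ℝ) ^ k ≤ P 0 * ∏ j ∈ Finset.range k, P (j+1) := hfinal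
        _ = ∏ j ∈ Finset.range (k+1), P j := by
            rw [Finset.prod_range_succ', mul_comm]

lemma shadow_pow {γ : Type*} [DecidableEq γ] [LinearOrder γ] [Inhabited γ]
    (n : ℕ) (hn : 0 < n) (F G : Finset (Multiset γ))
    (hF : ∀ M ∈ F, Multiset.card M = n + 1)
    (hsh : ∀ M ∈ F, ∀ a ∈ M, M.erase a ∈ G) :
    F.card ^ n ≤ G.card ^ (n + 1) := by
  rcases F.eq_empty_or_nonempty with rfl | hFne
  · simp [zero_pow hn.ne']
  set sortL : Multiset γ → List γ := fun M => M.sort (· ≤ ·) with hsortL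
  have hsort_coe : ∀ M : Multiset γ, ((sortL M : List γ) : Multiset γ) = M :=
    fun M => Multiset.sort_eq M _
  set FL := F.image sortL with hFL
  have hFLcard : FL.card = F.card := by
    refine Finset.card_image_of_injOn ?_
    intro M1 _ M2 _ h
    rw [← hsort_coe M1, ← hsort_coe M2, h]
  have hFLne : FL.Nonempty := hFne.image _
  have hFLlen : ∀ L ∈ FL, L.length = n + 1 := by
    intro L hL
    obtain ⟨M, hM, rfl⟩ := Finset.mem_image.mp hL
    rw [hsortL]
    simp only [Multiset.length_sort]
    exact hF M hM
  have hlw := LW (n+1) (Nat.succ_pos n) FL hFLne hFLlen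
  have hproj : ∀ j ∈ Finset.range (n+1),
      (FL.image (fun L => L.eraseIdx j)).card ≤ G.card := by
    intro j hj
    refine Finset.card_le_card_of_injOn (fun L => (L : Multiset γ)) ?_ ?_
    · intro L' hL'
      obtain ⟨L, hL, rfl⟩ := Finset.mem_image.mp hL'
      obtain ⟨M, hM, rfl⟩ := Finset.mem_image.mp hL
      have hjlt : j < (sortL M).length := by
        rw [hFLlen _ hL]
        exact Finset.mem_range.mp hj
      have hmem : (sortL M)[j] ∈ M := by
        have : (sortL M)[j] ∈ ((sortL M : List γ) : Multiset γ) := by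
          exact_mod_cast List.getElem_mem hjlt
        rwa [hsort_coe] at this
      have hperm : ((sortL M).eraseIdx j : Multiset γ) = M.erase ((sortL M)[j]) := by
        have h1 : (((sortL M).erase ((sortL M)[j]) : List γ) : Multiset γ)
            = ((sortL M).eraseIdx j : Multiset γ) :=
          Multiset.coe_eq_coe.mpr (List.erase_getElem hjlt)
        rw [← h1, ← Multiset.coe_erase, hsort_coe]
      show ((sortL M).eraseIdx j : Multiset γ) ∈ G
      rw [hperm]
      exact hsh M hM _ hmem
    · intro L1 h1 L2 h2 hcoe
      have hsorted : ∀ L' ∈ (FL.image (fun L => L.eraseIdx j)), L'.Pairwise (· ≤ ·) := by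
        intro L' hL'
        obtain ⟨L, hL, rfl⟩ := Finset.mem_image.mp hL'
        obtain ⟨M, hM, rfl⟩ := Finset.mem_image.mp hL
        exact List.Pairwise.sublist (List.eraseIdx_sublist _ j) (Multiset.pairwise_sort M _)
      have hperm : L1.Perm L2 := Multiset.coe_eq_coe.mp hcoe
      exact List.Perm.eq_of_pairwise' (hsorted L1 h1) (hsorted L2 h2) hperm
  -- combine
  have hbound : ∀ j ∈ Finset.range (n+1),
      ((FL.image (fun L => L.eraseIdx j)).card : ℝ) ≤ (G.card : ℝ) := by
    intro j hj
    exact_mod_cast hproj j hj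
  have : (F.card : ℝ) ^ n ≤ (G.card : ℝ) ^ (n+1) := by
    calc (F.card : ℝ) ^ n = (FL.card : ℝ) ^ (n + 1 - 1) := by rw [hFLcard, Nat.add_sub_cancel]
      _ ≤ ∏ j ∈ Finset.range (n+1), ((FL.image (fun L => L.eraseIdx j)).card : ℝ) := hlw
      _ ≤ ∏ j ∈ Finset.range (n+1), (G.card : ℝ) :=
          Finset.prod_le_prod (fun j _ => Nat.cast_nonneg _) hbound
      _ = (G.card : ℝ) ^ (n+1) := by rw [Finset.prod_const, Finset.card_range]
  exact_mod_cast this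

section Cands
variable {β : Type*} [DecidableEq β]

/-- candidate representations: multisets of size `k` with elements in `B` -/
def cands (B : Finset β) (k : ℕ) : Finset (Multiset β) :=
  ((k • B.val).powersetCard k).toFinset

lemma mem_cands {B : Finset β} {k : ℕ} {M : Multiset β} :
    M ∈ cands B k ↔ Multiset.card M = k ∧ ∀ a ∈ M, a ∈ B := by
  rw [cands, Multiset.mem_toFinset, Multiset.mem_powersetCard]
  constructor
  · rintro ⟨hle, hcard⟩
    refine ⟨hcard, fun a ha => ?_⟩
    have : a ∈ k • B.val := Multiset.mem_of_le hle ha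
    rcases k with _ | k
    · simp at this
    · rw [Multiset.mem_nsmul] at this
      exact this.2
  · rintro ⟨hcard, hel⟩
    refine ⟨?_, hcard⟩
    rw [Multiset.le_iff_count]
    intro a
    by_cases ha : a ∈ M
    · have h1 : M.count a ≤ k := hcard ▸ Multiset.count_le_card a M
      have h2 : (k • B.val).count a = k * B.val.count a := by
        rw [Multiset.count_nsmul]
      have h3 : B.val.count a = 1 := Multiset.count_eq_one_of_mem B.nodup (hel a ha)
      rw [h2, h3, mul_one]
      exact h1
    · rw [Multiset.count_eq_zero_of_notMem ha]
      exact Nat.zero_le _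

end Cands

section MinReps
variable {β : Type*} [AddCommMonoid β] [DecidableEq β] [LinearOrder β]

/-- the key used to order multisets -/
noncomputable def mkey (M : Multiset β) : Lex (β →₀ ℕ) := toLex (Multiset.toFinsupp M)

lemma mkey_inj : Function.Injective (mkey (β := β)) := by
  intro M N h
  have := congrArg ofLex h
  simpa [mkey] using Multiset.toFinsupp.injective (by exact this)

lemma mkey_add (M N : Multiset β) : mkey (M + N) = mkey M + mkey N := by
  unfold mkey
  rw [Multiset.toFinsupp_add]
  rfl

lemma mkey_lt_add_right {M N : Multiset β} (P : Multiset β) (h : mkey M < mkey N) :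
    mkey (M + P) < mkey (N + P) := by
  rw [mkey_add, mkey_add]
  exact add_lt_add_left h _

open scoped Classical in
/-- multisets that are the minimal representation of their own sum -/
noncomputable def minimals (B : Finset β) (k : ℕ) : Finset (Multiset β) :=
  (cands B k).filter (fun M => ∀ M' ∈ cands B k, M'.sum = M.sum → mkey M ≤ mkey M')

lemma minimals_subset (B : Finset β) (k : ℕ) : minimals B k ⊆ cands B k := by
  classical
  exact Finset.filter_subset _ _

lemma mem_minimals {B : Finset β} {k : ℕ} {M : Multiset β} :
    M ∈ minimals B k ↔ M ∈ cands B k ∧ ∀ M' ∈ cands B k, M'.sum = M.sum → mkey M ≤ mkey M' := by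
  classical
  rw [minimals]
  simp only [Finset.mem_filter]

lemma minimals_card (B : Finset β) (k : ℕ) :
    ((minimals B k).image Multiset.sum).card = (minimals B k).card ∧
    (minimals B k).image Multiset.sum = (cands B k).image Multiset.sum := by
  constructor
  · refine Finset.card_image_of_injOn ?_
    intro M1 h1 M2 h2 hsum
    rw [Finset.mem_coe, mem_minimals] at h1 h2
    have le12 := h1.2 M2 h2.1 hsum.symm
    have le21 := h2.2 M1 h1.1 hsum
    exact mkey_inj (le_antisymm le12 le21)
  · apply Finset.Subset.antisymm
    · exact Finset.image_subset_image (minimals_subset B k)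
    · intro x hx
      obtain ⟨M, hM, rfl⟩ := Finset.mem_image.mp hx
      have hR : ((cands B k).filter (fun N => N.sum = M.sum)).Nonempty :=
        ⟨M, Finset.mem_filter.mpr ⟨hM, rfl⟩⟩
      obtain ⟨M₀, hM₀, hmin⟩ := Finset.exists_min_image _ mkey hR
      have hM₀' := Finset.mem_filter.mp hM₀
      refine Finset.mem_image.mpr ⟨M₀, ?_, hM₀'.2⟩
      rw [mem_minimals]
      refine ⟨hM₀'.1, fun M' hM' hsum' => ?_⟩
      exact hmin M' (Finset.mem_filter.mpr ⟨hM', by rw [hsum', hM₀'.2]⟩)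

lemma minimals_shadow {B : Finset β} {n : ℕ} {M : Multiset β} (hM : M ∈ minimals B (n+1))
    {a : β} (ha : a ∈ M) : M.erase a ∈ minimals B n := by
  rw [mem_minimals] at hM ⊢
  obtain ⟨hMc, hMmin⟩ := hM
  rw [mem_cands] at hMc
  have haB : a ∈ B := hMc.2 a ha
  have hcard : Multiset.card (M.erase a) = n := by
    rw [Multiset.card_erase_of_mem ha, hMc.1]
    rfl
  have hec : M.erase a ∈ cands B n :=
    mem_cands.mpr ⟨hcard, fun b hb => hMc.2 b (Multiset.mem_of_le (Multiset.erase_le a M) hb)⟩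
  refine ⟨hec, fun M' hM' hsum' => ?_⟩
  -- M' + {a} is a candidate rep of M.sum
  have hM'c := mem_cands.mp hM'
  have hcand : M' + {a} ∈ cands B (n+1) := by
    refine mem_cands.mpr ⟨?_, ?_⟩
    · rw [Multiset.card_add, hM'c.1, Multiset.card_singleton]
    · intro b hb
      rcases Multiset.mem_add.mp hb with h | h
      · exact hM'c.2 b h
      · rw [Multiset.mem_singleton] at h
        rw [h]; exact haB
  have hsum : (M' + {a}).sum = M.sum := by
    rw [Multiset.sum_add, Multiset.sum_singleton, hsum']
    have : a ::ₘ M.erase a = M := Multiset.cons_erase ha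
    calc (M.erase a).sum + a = (a ::ₘ M.erase a).sum := by rw [Multiset.sum_cons, add_comm]
      _ = M.sum := by rw [this]
  have hkey := hMmin (M' + {a}) hcand hsum
  by_contra hlt
  push_neg at hlt
  have h1 : mkey (M' + {a}) < mkey (M.erase a + {a}) := mkey_lt_add_right _ hlt
  have h2 : M.erase a + {a} = M := by
    rw [add_comm, Multiset.singleton_add]
    exact Multiset.cons_erase ha
  rw [h2] at h1
  exact absurd hkey (not_le.mpr h1)

end MinReps

section Transfer
variable {α : Type*} [AddCommSemigroup α] [DecidableEq α] [DecidableEq (WithZero α)]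

/-- the coercion as an `AddHom` -/
def wzHom : AddHom α (WithZero α) where
  toFun := fun a => (a : WithZero α)
  map_add' := fun a b => by exact WithZero.coe_add a b

lemma kfold_image_eq (A : Finset α) (n : ℕ) :
    (kfold A n).image (wzHom : AddHom α (WithZero α))
      = (cands (A.image (wzHom : AddHom α (WithZero α))) (n+1)).image Multiset.sum := by
  set B := A.image (wzHom : AddHom α (WithZero α)) with hB
  induction n with
  | zero =>
    apply Finset.Subset.antisymm
    · intro x hx
      obtain ⟨a, ha, rfl⟩ := Finset.mem_image.mp hx
      refine Finset.mem_image.mpr ⟨{wzHom a}, ?_, Multiset.sum_singleton _⟩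
      refine mem_cands.mpr ⟨Multiset.card_singleton _, fun b hb => ?_⟩
      rw [Multiset.mem_singleton] at hb
      rw [hb]
      exact Finset.mem_image_of_mem _ ha
    · intro x hx
      obtain ⟨M, hM, rfl⟩ := Finset.mem_image.mp hx
      obtain ⟨hcard, hel⟩ := mem_cands.mp hM
      obtain ⟨b, rfl⟩ := Multiset.card_eq_one.mp hcard
      obtain ⟨a, ha, rfl⟩ := Finset.mem_image.mp (hel b (Multiset.mem_singleton_self b))
      rw [Multiset.sum_singleton]
      exact Finset.mem_image_of_mem _ ha
  | succ n ih =>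
    have hunf : kfold A (n+1) = kfold A n + A := rfl
    rw [hunf, Finset.image_add, ih]
    apply Finset.Subset.antisymm
    · intro x hx
      obtain ⟨u, hu, v, hv, rfl⟩ := Finset.mem_add.mp hx
      obtain ⟨M, hM, rfl⟩ := Finset.mem_image.mp hu
      obtain ⟨hcard, hel⟩ := mem_cands.mp hM
      refine Finset.mem_image.mpr ⟨M + {v}, ?_, ?_⟩
      · refine mem_cands.mpr ⟨?_, fun b hb => ?_⟩
        · rw [Multiset.card_add, hcard, Multiset.card_singleton]
        · rcases Multiset.mem_add.mp hb with h | h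
          · exact hel b h
          · rw [Multiset.mem_singleton] at h
            rw [h]; exact hv
      · rw [Multiset.sum_add, Multiset.sum_singleton]
    · intro x hx
      obtain ⟨M, hM, rfl⟩ := Finset.mem_image.mp hx
      obtain ⟨hcard, hel⟩ := mem_cands.mp hM
      have hMne : M ≠ 0 := by
        intro h
        rw [h] at hcard
        simp at hcard
      obtain ⟨b, hb⟩ := Multiset.exists_mem_of_ne_zero hMne
      have hbB : b ∈ B := hel b hb
      have herase : M.erase b ∈ cands B (n+1+1-1) := by
        refine mem_cands.mpr ⟨?_, fun c hc => hel c (Multiset.mem_of_le (Multiset.erase_le b M) hc)⟩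
        rw [Multiset.card_erase_of_mem hb, hcard]
        rfl
      refine Finset.mem_add.mpr ⟨(M.erase b).sum, ?_, b, hbB, ?_⟩
      · exact Finset.mem_image.mpr ⟨M.erase b, herase, rfl⟩
      · calc (M.erase b).sum + b = (b ::ₘ M.erase b).sum := by rw [Multiset.sum_cons, add_comm]
          _ = M.sum := by rw [Multiset.cons_erase hb]

end Transfer


lemma kfold_consec {α : Type*} [AddCommSemigroup α] [DecidableEq α]
    (A : Finset α) (n : ℕ) (hn : 0 < n) :
    (kfold A n).card ^ n ≤ (kfold A (n-1)).card ^ (n+1) := by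
  classical
  letI : LinearOrder (WithZero α) := by
    letI := Classical.decRel (WellOrderingRel (α := WithZero α))
    exact linearOrderOfSTO WellOrderingRel
  letI : Inhabited (WithZero α) := ⟨0⟩
  have hinj : Function.Injective (wzHom : AddHom α (WithZero α)) :=
    fun a b h => WithZero.coe_inj.mp h
  set B := A.image (wzHom : AddHom α (WithZero α)) with hB
  have hcard : ∀ m : ℕ, (kfold A m).card = (minimals B (m+1)).card := by
    intro m
    rw [← Finset.card_image_of_injective (kfold A m) hinj, kfold_image_eq,
      ← (minimals_card B (m+1)).2, (minimals_card B (m+1)).1]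
  have hshadow : (minimals B (n+1)).card ^ n ≤ (minimals B n).card ^ (n+1) := by
    refine shadow_pow n hn (minimals B (n+1)) (minimals B n) ?_ ?_
    · intro M hM
      exact (mem_cands.mp (minimals_subset B (n+1) hM)).1
    · intro M hM a ha
      exact minimals_shadow hM ha
  have h1 : (kfold A n).card = (minimals B (n+1)).card := hcard n
  have h2 : (kfold A (n-1)).card = (minimals B n).card := by
    have : n - 1 + 1 = n := Nat.succ_pred_eq_of_pos hn
    rw [hcard (n-1), this]
  rw [h1, h2]
  exact hshadow

theorem kfold_card_root_antitone {α : Type*} [AddCommSemigroup α] [DecidableEq α]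
    (A : Finset α) (hA : A.Nonempty) (i k : ℕ) (hi : 1 ≤ i) (hik : i < k) :
    (kfold A (k - 1)).card ^ i ≤ (kfold A (i - 1)).card ^ k := by
  have hcons : ∀ m, 1 ≤ m → (kfold A (m+1-1)).card ^ m ≤ (kfold A (m-1)).card ^ (m+1) :=
    fun m hm => kfold_consec A m hm
  have main : ∀ k, i < k → (kfold A (k-1)).card ^ i ≤ (kfold A (i-1)).card ^ k := by
    intro k
    induction k with
    | zero => omega
    | succ k ihk =>
      intro hik
      rcases Nat.lt_or_ge i k with h | h
      · have hk1 : 1 ≤ k := le_trans hi h.le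
        have h1 : (kfold A (k+1-1)).card ^ k ≤ (kfold A (k-1)).card ^ (k+1) := hcons k hk1
        have h2 : (kfold A (k-1)).card ^ i ≤ (kfold A (i-1)).card ^ k := ihk h
        have key : ((kfold A (k+1-1)).card ^ i) ^ k ≤ ((kfold A (i-1)).card ^ (k+1)) ^ k := by
          calc ((kfold A (k+1-1)).card ^ i) ^ k = ((kfold A (k+1-1)).card ^ k) ^ i := by
                rw [← pow_mul, ← pow_mul, Nat.mul_comm]
            _ ≤ ((kfold A (k-1)).card ^ (k+1)) ^ i := Nat.pow_le_pow_left h1 i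
            _ = ((kfold A (k-1)).card ^ i) ^ (k+1) := by
                rw [← pow_mul, ← pow_mul, Nat.mul_comm]
            _ ≤ ((kfold A (i-1)).card ^ k) ^ (k+1) := Nat.pow_le_pow_left h2 (k+1)
            _ = ((kfold A (i-1)).card ^ (k+1)) ^ k := by
                rw [← pow_mul, ← pow_mul, Nat.mul_comm]
        exact (Nat.pow_le_pow_iff_left (Nat.one_le_iff_ne_zero.mp hk1)).mp key
      · have hk : k = i := by omega
        subst hk
        exact hcons k hi
  exact main k hik
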